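/- Let L_τ and ℒ_τ be symmetric N×N matrices with ℒ_τ of rank K having smallest nonzero eigenvalue λ_K > 0, and suppose ‖L_τ − ℒ_τ‖ ≤ λ_K/8 (spectral norm). Let X_τ ∈ R^{N×K} contain orthonormal eigenvectors of the top-K eigenvalues of L_τ, and 𝒳_τ ∈ R^{N×K} orthonormal eigenvectors of the K positive eigenvalues of ℒ_τ. Then there exists an orthogonal matrix 𝒪 ∈ R^{K×K} such that ‖X_τ − 𝒳_τ 𝒪‖_F ≤ (8√(2K)/λ_K)‖L_τ − ℒ_τ‖. -/

import Mathlib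

open Matrix

noncomputable def specNorm {N : ℕ} (A : Matrix (Fin N) (Fin N) ℝ) : ℝ :=
  ‖Matrix.toEuclideanCLM (𝕜 := ℝ) A‖

noncomputable def frobNorm {m n : ℕ} (A : Matrix (Fin m) (Fin n) ℝ) : ℝ :=
  Real.sqrt (∑ i, ∑ j, (A i j) ^ 2)

namespace DKaux


lemma dot_eq_inner {N : ℕ} (x y : Fin N → ℝ) :
    x ⬝ᵥ y = (inner ℝ ((WithLp.equiv 2 _).symm x) ((WithLp.equiv 2 _).symm y) : ℝ) := by
  simp [PiLp.inner_apply, dotProduct, RCLike.inner_apply, mul_comm]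

lemma norm_symm_sq {N : ℕ} (x : Fin N → ℝ) :
    ‖((WithLp.equiv 2 _).symm x : EuclideanSpace ℝ (Fin N))‖ ^ 2 = x ⬝ᵥ x := by
  rw [dot_eq_inner, real_inner_self_eq_norm_sq]

lemma specNorm_nonneg {N : ℕ} (A : Matrix (Fin N) (Fin N) ℝ) : 0 ≤ specNorm A :=
  norm_nonneg _

lemma norm_mulVec_le {N : ℕ} (A : Matrix (Fin N) (Fin N) ℝ) (x : Fin N → ℝ) :
    ‖((WithLp.equiv 2 _).symm (A *ᵥ x) : EuclideanSpace ℝ (Fin N))‖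
      ≤ specNorm A * ‖((WithLp.equiv 2 _).symm x : EuclideanSpace ℝ (Fin N))‖ := by
  have h1 : ‖(Matrix.toEuclideanCLM (𝕜 := ℝ) A) ((WithLp.equiv 2 _).symm x)‖
      ≤ specNorm A * ‖((WithLp.equiv 2 _).symm x : EuclideanSpace ℝ (Fin N))‖ :=
    (Matrix.toEuclideanCLM (𝕜 := ℝ) A).le_opNorm _
  exact h1

lemma spec_mulVec_dot {N : ℕ} (A : Matrix (Fin N) (Fin N) ℝ) (x : Fin N → ℝ) :
    (A *ᵥ x) ⬝ᵥ (A *ᵥ x) ≤ specNorm A ^ 2 * (x ⬝ᵥ x) := by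
  have h1 := norm_mulVec_le A x
  have h4 : ‖((WithLp.equiv 2 _).symm (A *ᵥ x) : EuclideanSpace ℝ (Fin N))‖ ^ 2
      ≤ (specNorm A * ‖((WithLp.equiv 2 _).symm x : EuclideanSpace ℝ (Fin N))‖) ^ 2 :=
    pow_le_pow_left₀ (norm_nonneg _) h1 2
  rw [norm_symm_sq, mul_pow, norm_symm_sq] at h4
  exact h4

lemma spec_quad_abs {N : ℕ} (A : Matrix (Fin N) (Fin N) ℝ) (x : Fin N → ℝ) :
    |x ⬝ᵥ (A *ᵥ x)| ≤ specNorm A * (x ⬝ᵥ x) := by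
  have h1 := norm_mulVec_le A x
  have h2 := abs_real_inner_le_norm ((WithLp.equiv 2 _).symm x : EuclideanSpace ℝ (Fin N))
    ((WithLp.equiv 2 _).symm (A *ᵥ x))
  rw [← dot_eq_inner] at h2
  have h3 := norm_symm_sq x
  calc |x ⬝ᵥ (A *ᵥ x)| ≤ _ := h2
    _ ≤ ‖((WithLp.equiv 2 _).symm x : EuclideanSpace ℝ (Fin N))‖ *
        (specNorm A * ‖((WithLp.equiv 2 _).symm x : EuclideanSpace ℝ (Fin N))‖) :=
        mul_le_mul_of_nonneg_left h1 (norm_nonneg _)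
    _ = specNorm A * (x ⬝ᵥ x) := by rw [← h3]; ring

lemma mulVec_dot {N K : ℕ} (A : Matrix (Fin N) (Fin K) ℝ) (c : Fin K → ℝ) (y : Fin N → ℝ) :
    (A *ᵥ c) ⬝ᵥ y = c ⬝ᵥ (Aᵀ *ᵥ y) := by
  simp only [dotProduct, mulVec, transpose_apply, Finset.sum_mul, Finset.mul_sum]
  rw [Finset.sum_comm]
  exact Finset.sum_congr rfl fun i _ => Finset.sum_congr rfl fun j _ => by ring

lemma trace_transpose_mul {N K : ℕ} (A B : Matrix (Fin N) (Fin K) ℝ) :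
    (Aᵀ * B).trace = ∑ i, ∑ j, A i j * B i j := by
  simp only [Matrix.trace, Matrix.diag, Matrix.mul_apply, transpose_apply]
  rw [Finset.sum_comm]



lemma rank_of_orth {N K : ℕ} (𝒳 : Matrix (Fin N) (Fin K) ℝ) (h : 𝒳ᵀ * 𝒳 = 1) :
    𝒳.rank = K := by
  refine le_antisymm (by simpa using 𝒳.rank_le_card_width) ?_
  have h1 : ((𝒳ᵀ * 𝒳).rank : ℕ) ≤ 𝒳.rank := Matrix.rank_mul_le_right _ _
  rw [h] at h1
  simpa using h1

lemma range_eq {N K : ℕ} (ℒ : Matrix (Fin N) (Fin N) ℝ) (𝒳 : Matrix (Fin N) (Fin K) ℝ)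
    (h𝒳orth : 𝒳ᵀ * 𝒳 = 1) (Λ : Fin K → ℝ) (hΛ : ∀ s, Λ s ≠ 0)
    (heig : ℒ * 𝒳 = 𝒳 * Matrix.diagonal Λ) (hrank : ℒ.rank = K) :
    LinearMap.range 𝒳.mulVecLin = LinearMap.range ℒ.mulVecLin := by
  have hfac : ℒ * (𝒳 * Matrix.diagonal fun s => (Λ s)⁻¹) = 𝒳 := by
    rw [← Matrix.mul_assoc, heig, Matrix.mul_assoc, diagonal_mul_diagonal]
    simp only [fun s => mul_inv_cancel₀ (hΛ s)]
    rw [Matrix.diagonal_one, Matrix.mul_one]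
  have hle : LinearMap.range 𝒳.mulVecLin ≤ LinearMap.range ℒ.mulVecLin := by
    rw [← hfac, Matrix.mulVecLin_mul]
    exact LinearMap.range_comp_le_range _ _
  have hfr1 : Module.finrank ℝ (LinearMap.range ℒ.mulVecLin) = K := hrank
  have hfr2 : Module.finrank ℝ (LinearMap.range 𝒳.mulVecLin) = K := rank_of_orth 𝒳 h𝒳orth
  exact (Submodule.eq_of_le_of_finrank_le hle (by rw [hfr1, hfr2])).symm ▸ rfl

lemma proj_fix {N K : ℕ} (ℒ : Matrix (Fin N) (Fin N) ℝ) (𝒳 : Matrix (Fin N) (Fin K) ℝ)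
    (h𝒳orth : 𝒳ᵀ * 𝒳 = 1) (Λ : Fin K → ℝ) (hΛ : ∀ s, Λ s ≠ 0)
    (heig : ℒ * 𝒳 = 𝒳 * Matrix.diagonal Λ) (hrank : ℒ.rank = K) :
    𝒳 * 𝒳ᵀ * ℒ = ℒ := by
  have hr := range_eq ℒ 𝒳 h𝒳orth Λ hΛ heig hrank
  have key : ∀ u : Fin N → ℝ, (𝒳 * 𝒳ᵀ * ℒ) *ᵥ u = ℒ *ᵥ u := by
    intro u
    have hmem : ℒ *ᵥ u ∈ LinearMap.range 𝒳.mulVecLin := by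
      rw [hr]; exact ⟨u, rfl⟩
    obtain ⟨a, ha⟩ := hmem
    rw [Matrix.mulVecLin_apply] at ha
    calc (𝒳 * 𝒳ᵀ * ℒ) *ᵥ u = (𝒳 * 𝒳ᵀ) *ᵥ (ℒ *ᵥ u) := (Matrix.mulVec_mulVec _ _ _).symm
      _ = (𝒳 * 𝒳ᵀ) *ᵥ (𝒳 *ᵥ a) := by rw [ha]
      _ = (𝒳 * 𝒳ᵀ * 𝒳) *ᵥ a := Matrix.mulVec_mulVec _ _ _
      _ = (𝒳 * (𝒳ᵀ * 𝒳)) *ᵥ a := by rw [Matrix.mul_assoc]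
      _ = 𝒳 *ᵥ a := by rw [h𝒳orth, Matrix.mul_one]
      _ = ℒ *ᵥ u := ha
  ext i j
  have := congrFun (key (Pi.single j 1)) i
  simpa [Matrix.mulVec_single] using this



lemma dot_self_nonneg {N : ℕ} (x : Fin N → ℝ) : 0 ≤ x ⬝ᵥ x :=
  Finset.sum_nonneg fun i _ => mul_self_nonneg (x i)

lemma dot_self_pos {N : ℕ} {x : Fin N → ℝ} (hx : x ≠ 0) : 0 < x ⬝ᵥ x :=
  lt_of_le_of_ne (dot_self_nonneg x) (fun h => hx (dotProduct_self_eq_zero.mp h.symm))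

lemma dot_eq_inner_lin {N : ℕ} (x y : Fin N → ℝ) :
    x ⬝ᵥ y = (inner ℝ ((WithLp.linearEquiv 2 ℝ _).symm x : EuclideanSpace ℝ (Fin N))
      ((WithLp.linearEquiv 2 ℝ _).symm y) : ℝ) := by
  simp [PiLp.inner_apply, dotProduct, RCLike.inner_apply, mul_comm, WithLp.linearEquiv]

lemma orth_mul_dot {N K : ℕ} (A : Matrix (Fin N) (Fin K) ℝ) (horth : Aᵀ * A = 1)
    (a b : Fin K → ℝ) : (A *ᵥ a) ⬝ᵥ (A *ᵥ b) = a ⬝ᵥ b := by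
  rw [mulVec_dot, Matrix.mulVec_mulVec, horth, Matrix.one_mulVec]

lemma diag_mulVec {K : ℕ} (d : Fin K → ℝ) (c : Fin K → ℝ) :
    Matrix.diagonal d *ᵥ c = fun t => d t * c t := by
  ext t
  simp [Matrix.mulVec, Matrix.diagonal, dotProduct]

set_option maxHeartbeats 2000000 in
lemma eig_lower {N K : ℕ} (L ℒ : Matrix (Fin N) (Fin N) ℝ) (hLt : Lᵀ = L)
    (lamK ε : ℝ) (hε : 0 ≤ ε)
    (𝒳 : Matrix (Fin N) (Fin K) ℝ) (h𝒳orth : 𝒳ᵀ * 𝒳 = 1)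
    (Λ : Fin K → ℝ) (hΛ : ∀ s, lamK ≤ Λ s)
    (h𝒳eig : ℒ * 𝒳 = 𝒳 * Matrix.diagonal Λ)
    (X : Matrix (Fin N) (Fin K) ℝ) (hXorth : Xᵀ * X = 1)
    (W : Fin K → ℝ) (hXeig : L * X = X * Matrix.diagonal W)
    (htop : ∀ v : Fin N → ℝ, (∀ s, (∑ i, v i * X i s) = 0) →
      v ⬝ᵥ L *ᵥ v ≤ (⨅ s, W s) * (v ⬝ᵥ v))
    (hquad : ∀ v : Fin N → ℝ, |v ⬝ᵥ ((L - ℒ) *ᵥ v)| ≤ ε * (v ⬝ᵥ v)) :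
    ∀ s, lamK - ε ≤ W s := by
  intro s
  classical
  set eqv : EuclideanSpace ℝ (Fin N) ≃ₗ[ℝ] (Fin N → ℝ) :=
    WithLp.linearEquiv 2 ℝ (Fin N → ℝ) with heqv
  set col : Fin K → EuclideanSpace ℝ (Fin N) := fun t => eqv.symm (fun i => X i t) with hcol
  set B : Finset (Fin K) := Finset.univ.filter (fun t => W s < W t) with hB
  set U : Submodule ℝ (EuclideanSpace ℝ (Fin N)) :=
    Submodule.span ℝ ↑(B.image col) with hU
  set Z : Submodule ℝ (EuclideanSpace ℝ (Fin N)) :=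
    LinearMap.range (eqv.symm.toLinearMap ∘ₗ 𝒳.mulVecLin) with hZ
  -- dimension counting
  have hUcard : Module.finrank ℝ U ≤ B.card :=
    le_trans (finrank_span_finset_le_card _) (Finset.card_image_le)
  have hBcard : B.card + 1 ≤ K := by
    have hs : s ∉ B := by simp [hB]
    have h1 : (insert s B).card ≤ Fintype.card (Fin K) := Finset.card_le_univ _
    rw [Finset.card_insert_of_notMem hs] at h1
    simpa using h1
  have hZfin : Module.finrank ℝ Z = K := by
    have hinj : Function.Injective (eqv.symm.toLinearMap ∘ₗ 𝒳.mulVecLin) := by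
      refine eqv.symm.injective.comp ?_
      intro a b hab
      have h2 := congrArg (fun y => 𝒳ᵀ *ᵥ y) hab
      simpa [Matrix.mulVecLin_apply, Matrix.mulVec_mulVec, h𝒳orth, Matrix.one_mulVec] using h2
    rw [LinearMap.finrank_range_of_inj hinj]
    simp
  have hfinE : Module.finrank ℝ (EuclideanSpace ℝ (Fin N)) = N := by simp
  have hsumU : Module.finrank ℝ U + Module.finrank ℝ Uᗮ = N := by
    rw [Submodule.finrank_add_finrank_orthogonal U, hfinE]
  -- nontrivial intersection
  have hnb : Uᗮ ⊓ Z ≠ ⊥ := by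
    intro hbot
    have h3 := Submodule.finrank_sup_add_finrank_inf_eq Uᗮ Z
    rw [hbot] at h3
    simp only [finrank_bot, add_zero] at h3
    have h4 : Module.finrank ℝ ↥(Uᗮ ⊔ Z) ≤ N := le_trans (Submodule.finrank_le _) (le_of_eq hfinE)
    omega
  obtain ⟨v, hvmem, hv0⟩ := Submodule.exists_mem_ne_zero_of_ne_bot hnb
  obtain ⟨hvY, hvZ⟩ := hvmem
  set vf : Fin N → ℝ := eqv v with hvf
  have hvf0 : vf ≠ 0 := fun h => hv0 (eqv.map_eq_zero_iff.mp h)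
  obtain ⟨a, ha⟩ := hvZ
  have haeq : 𝒳 *ᵥ a = vf := by
    have := congrArg eqv ha
    simpa [Matrix.mulVecLin_apply, hvf] using this
  set c : Fin K → ℝ := Xᵀ *ᵥ vf with hc
  set w : Fin N → ℝ := vf - X *ᵥ c with hw
  -- coefficients on the "high" eigenvalues vanish
  have hcB : ∀ t ∈ B, c t = 0 := by
    intro t ht
    have hcolU : col t ∈ U := Submodule.subset_span
      (Finset.mem_coe.mpr (Finset.mem_image_of_mem col ht))
    have h0 : (inner ℝ (col t) v : ℝ) = 0 :=
      (Submodule.mem_orthogonal U v).mp hvY (col t) hcolU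
    have h1 : c t = (fun i => X i t) ⬝ᵥ vf := by
      simp [hc, Matrix.mulVec, dotProduct]
    have h2 : (fun i => X i t) ⬝ᵥ vf
        = (inner ℝ ((WithLp.linearEquiv 2 ℝ _).symm fun i => X i t : EuclideanSpace ℝ (Fin N))
            ((WithLp.linearEquiv 2 ℝ _).symm vf) : ℝ) := dot_eq_inner_lin _ _
    have h3 : ((WithLp.linearEquiv 2 ℝ _).symm vf : EuclideanSpace ℝ (Fin N)) = v := by
      rw [hvf]; exact eqv.symm_apply_apply v
    rw [h1, h2, h3]
    exact h0
  have hXw : Xᵀ *ᵥ w = 0 := by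
    rw [hw, Matrix.mulVec_sub, Matrix.mulVec_mulVec, hXorth, Matrix.one_mulVec, hc, sub_self]
  have hsplit : vf = X *ᵥ c + w := by rw [hw]; abel
  have hwXdot : ∀ b : Fin K → ℝ, w ⬝ᵥ (X *ᵥ b) = 0 := by
    intro b
    rw [dotProduct_comm, mulVec_dot, hXw, dotProduct_zero]
  -- compute L *ᵥ vf
  have hLXc : L *ᵥ (X *ᵥ c) = X *ᵥ (fun t => W t * c t) := by
    rw [Matrix.mulVec_mulVec, hXeig, ← Matrix.mulVec_mulVec, diag_mulVec]
  have hLvf : L *ᵥ vf = X *ᵥ (fun t => W t * c t) + L *ᵥ w := by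
    rw [hsplit, Matrix.mulVec_add, hLXc]
  -- upper bound on Rayleigh quotient
  have hterm2 : (X *ᵥ c) ⬝ᵥ (L *ᵥ w) = 0 := by
    rw [dotProduct_comm, mulVec_dot, hLt, hLXc]
    exact hwXdot _
  have hterm1 : (X *ᵥ c) ⬝ᵥ (X *ᵥ fun t => W t * c t) = ∑ t, c t * (W t * c t) :=
    orth_mul_dot X hXorth _ _
  have hterm4 : w ⬝ᵥ (L *ᵥ w) ≤ W s * (w ⬝ᵥ w) := by
    have h5 : ∀ s', (∑ i, w i * X i s') = 0 := by
      intro s'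
      have := congrFun hXw s'
      simp only [Matrix.mulVec, dotProduct, transpose_apply, Pi.zero_apply] at this
      rw [← this]
      exact Finset.sum_congr rfl fun i _ => mul_comm _ _
    have h6 := htop w h5
    have h7 : (⨅ s', W s') ≤ W s := ciInf_le (Set.Finite.bddBelow (Set.finite_range W)) s
    exact le_trans h6 (mul_le_mul_of_nonneg_right h7 (dot_self_nonneg w))
  have hsum1 : ∑ t, c t * (W t * c t) ≤ W s * (c ⬝ᵥ c) := by
    rw [dotProduct, Finset.mul_sum]
    refine Finset.sum_le_sum fun t _ => ?_
    by_cases ht : t ∈ B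
    · rw [hcB t ht]; ring_nf; exact le_refl _
    · have h8 : ¬ (W s < W t) := by simpa [hB] using ht
      push_neg at h8
      nlinarith [sq_nonneg (c t)]
  have hup : vf ⬝ᵥ (L *ᵥ vf) ≤ W s * (vf ⬝ᵥ vf) := by
    have hnorm : vf ⬝ᵥ vf = c ⬝ᵥ c + w ⬝ᵥ w := by
      rw [hsplit, add_dotProduct, dotProduct_add, dotProduct_add,
        orth_mul_dot X hXorth, hwXdot, dotProduct_comm (X *ᵥ c) w, hwXdot]
      ring
    calc vf ⬝ᵥ (L *ᵥ vf)
        = ∑ t, c t * (W t * c t) + w ⬝ᵥ (L *ᵥ w) := by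
          rw [hLvf]
          nth_rewrite 1 [hsplit]
          rw [add_dotProduct, dotProduct_add, dotProduct_add,
            hterm1, hterm2, hwXdot]
          ring
      _ ≤ W s * (c ⬝ᵥ c) + W s * (w ⬝ᵥ w) := add_le_add hsum1 hterm4
      _ = W s * (vf ⬝ᵥ vf) := by rw [hnorm]; ring
  -- lower bound on Rayleigh quotient
  have hlow : (lamK - ε) * (vf ⬝ᵥ vf) ≤ vf ⬝ᵥ (L *ᵥ vf) := by
    have hLsplit : L *ᵥ vf = ℒ *ᵥ vf + (L - ℒ) *ᵥ vf := by
      rw [Matrix.sub_mulVec]; abel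
    have hℒvf : vf ⬝ᵥ (ℒ *ᵥ vf) = ∑ t, a t * (Λ t * a t) := by
      rw [← haeq, Matrix.mulVec_mulVec, h𝒳eig, ← Matrix.mulVec_mulVec, diag_mulVec]
      exact orth_mul_dot 𝒳 h𝒳orth _ _
    have hℒge : lamK * (vf ⬝ᵥ vf) ≤ vf ⬝ᵥ (ℒ *ᵥ vf) := by
      have haa : vf ⬝ᵥ vf = a ⬝ᵥ a := by rw [← haeq, orth_mul_dot 𝒳 h𝒳orth]
      rw [hℒvf, haa, dotProduct, Finset.mul_sum]
      refine Finset.sum_le_sum fun t _ => ?_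
      nlinarith [sq_nonneg (a t), hΛ t]
    have hE : -(ε * (vf ⬝ᵥ vf)) ≤ vf ⬝ᵥ ((L - ℒ) *ᵥ vf) := neg_le_of_abs_le (hquad vf)
    rw [hLsplit, dotProduct_add]
    linarith
  have hpos : 0 < vf ⬝ᵥ vf := dot_self_pos hvf0
  nlinarith [le_trans hlow hup]


end DKaux
set_option maxHeartbeats 4000000 in
/-- Davis–Kahan-type eigenvector perturbation bound.  𝒳τ contains
orthonormal eigenvectors of the K positive eigenvalues of the rank-K matrix ℒτ (all at
least λ_K), Xτ contains orthonormal eigenvectors of the top-K eigenvalues W of Lτ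
(every direction orthogonal to the columns of Xτ has Rayleigh quotient at most min W). -/
theorem davis_kahan_eigenvector_bound
    (N K : ℕ) (Lτ ℒτ : Matrix (Fin N) (Fin N) ℝ)
    (hL : Lτ.IsHermitian) (hℒ : ℒτ.IsHermitian)
    (hrank : ℒτ.rank = K)
    (lamK : ℝ) (hlamK : 0 < lamK)
    -- eigenvectors of the K positive eigenvalues of ℒτ, each eigenvalue ≥ lamK
    (𝒳τ : Matrix (Fin N) (Fin K) ℝ) (h𝒳orth : 𝒳τᵀ * 𝒳τ = 1)
    (Λ : Fin K → ℝ) (hΛ : ∀ s, lamK ≤ Λ s)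
    (h𝒳eig : ℒτ * 𝒳τ = 𝒳τ * Matrix.diagonal Λ)
    -- orthonormal eigenvectors of the top K eigenvalues of Lτ
    (Xτ : Matrix (Fin N) (Fin K) ℝ) (hXorth : Xτᵀ * Xτ = 1)
    (W : Fin K → ℝ) (hXeig : Lτ * Xτ = Xτ * Matrix.diagonal W)
    (htop : ∀ v : Fin N → ℝ, (∀ s, (∑ i, v i * Xτ i s) = 0) →
      v ⬝ᵥ Lτ.mulVec v ≤ (⨅ s, W s) * (v ⬝ᵥ v))
    (hclose : specNorm (Lτ - ℒτ) ≤ lamK / 8) :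
    ∃ 𝒪 : Matrix (Fin K) (Fin K) ℝ, 𝒪ᵀ * 𝒪 = 1 ∧ 𝒪 * 𝒪ᵀ = 1 ∧
      frobNorm (Xτ - 𝒳τ * 𝒪) ≤ (8 * Real.sqrt (2 * K) / lamK) * specNorm (Lτ - ℒτ) := by
  classical
  set ε := specNorm (Lτ - ℒτ) with hεdef
  have hε0 : 0 ≤ ε := DKaux.specNorm_nonneg _
  have hδpos : 0 < lamK - ε := by nlinarith
  have hLt : Lτᵀ = Lτ := by
    rw [← Matrix.conjTranspose_eq_transpose_of_trivial]; exact hL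
  have hquad : ∀ v : Fin N → ℝ, |v ⬝ᵥ ((Lτ - ℒτ) *ᵥ v)| ≤ ε * (v ⬝ᵥ v) :=
    fun v => DKaux.spec_quad_abs _ v
  have hW : ∀ s, lamK - ε ≤ W s :=
    DKaux.eig_lower Lτ ℒτ hLt lamK ε hε0 𝒳τ h𝒳orth Λ hΛ h𝒳eig Xτ hXorth W hXeig htop hquad
  have hWne : ∀ s, W s ≠ 0 := fun s => ne_of_gt (lt_of_lt_of_le hδpos (hW s))
  have hΛne : ∀ s, Λ s ≠ 0 := fun s => ne_of_gt (lt_of_lt_of_le hlamK (hΛ s))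
  have hPℒ : 𝒳τ * 𝒳τᵀ * ℒτ = ℒτ := DKaux.proj_fix ℒτ 𝒳τ h𝒳orth Λ hΛne h𝒳eig hrank
  set S := 𝒳τᵀ * Xτ with hSdef
  set M := Xτ - 𝒳τ * S with hMdef
  set Nm := M * Matrix.diagonal W with hNmdef
  -- key identity : Nm = (1 - P) (Lτ - ℒτ) Xτ
  have h1' : 𝒳τ * (𝒳τᵀ * (ℒτ * Xτ)) = ℒτ * Xτ := by
    rw [← Matrix.mul_assoc, ← Matrix.mul_assoc, hPℒ]
  have hNmId : Nm = (1 - 𝒳τ * 𝒳τᵀ) * ((Lτ - ℒτ) * Xτ) := by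
    rw [hNmdef, hMdef, hSdef]
    simp only [Matrix.sub_mul, Matrix.mul_sub, Matrix.one_mul, Matrix.mul_assoc]
    rw [← hXeig, h1']
    abel
  -- contraction property of 1 - P
  have hcontract : ∀ y : Fin N → ℝ,
      ((1 - 𝒳τ * 𝒳τᵀ) *ᵥ y) ⬝ᵥ ((1 - 𝒳τ * 𝒳τᵀ) *ᵥ y) ≤ y ⬝ᵥ y := by
    intro y
    have hyP : (1 - 𝒳τ * 𝒳τᵀ) *ᵥ y = y - 𝒳τ *ᵥ (𝒳τᵀ *ᵥ y) := by
      rw [Matrix.sub_mulVec, Matrix.one_mulVec, Matrix.mulVec_mulVec]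
    rw [hyP]
    have e1 : (𝒳τ *ᵥ (𝒳τᵀ *ᵥ y)) ⬝ᵥ (𝒳τ *ᵥ (𝒳τᵀ *ᵥ y)) = (𝒳τᵀ *ᵥ y) ⬝ᵥ (𝒳τᵀ *ᵥ y) :=
      DKaux.orth_mul_dot 𝒳τ h𝒳orth _ _
    have e2 : (𝒳τ *ᵥ (𝒳τᵀ *ᵥ y)) ⬝ᵥ y = (𝒳τᵀ *ᵥ y) ⬝ᵥ (𝒳τᵀ *ᵥ y) := by
      rw [DKaux.mulVec_dot]
    have e3 : y ⬝ᵥ (𝒳τ *ᵥ (𝒳τᵀ *ᵥ y)) = (𝒳τᵀ *ᵥ y) ⬝ᵥ (𝒳τᵀ *ᵥ y) := by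
      rw [dotProduct_comm]; exact e2
    have hexp : (y - 𝒳τ *ᵥ (𝒳τᵀ *ᵥ y)) ⬝ᵥ (y - 𝒳τ *ᵥ (𝒳τᵀ *ᵥ y))
        = y ⬝ᵥ y - (𝒳τᵀ *ᵥ y) ⬝ᵥ (𝒳τᵀ *ᵥ y) := by
      rw [sub_dotProduct, dotProduct_sub, dotProduct_sub, e1, e2, e3]
      ring
    rw [hexp]
    linarith [DKaux.dot_self_nonneg (𝒳τᵀ *ᵥ y)]
  have hNu : ∀ u : Fin K → ℝ, (Nm *ᵥ u) ⬝ᵥ (Nm *ᵥ u) ≤ ε^2 * (u ⬝ᵥ u) := by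
    intro u
    have h3 : Nm *ᵥ u = (1 - 𝒳τ * 𝒳τᵀ) *ᵥ ((Lτ - ℒτ) *ᵥ (Xτ *ᵥ u)) := by
      rw [hNmId, ← Matrix.mulVec_mulVec, ← Matrix.mulVec_mulVec]
    rw [h3]
    calc ((1 - 𝒳τ * 𝒳τᵀ) *ᵥ ((Lτ - ℒτ) *ᵥ (Xτ *ᵥ u))) ⬝ᵥ _
        ≤ ((Lτ - ℒτ) *ᵥ (Xτ *ᵥ u)) ⬝ᵥ ((Lτ - ℒτ) *ᵥ (Xτ *ᵥ u)) := hcontract _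
      _ ≤ ε^2 * ((Xτ *ᵥ u) ⬝ᵥ (Xτ *ᵥ u)) := DKaux.spec_mulVec_dot _ _
      _ = ε^2 * (u ⬝ᵥ u) := by rw [DKaux.orth_mul_dot Xτ hXorth]
  have hMN : M = Nm * Matrix.diagonal (fun s => (W s)⁻¹) := by
    rw [hNmdef, Matrix.mul_assoc, Matrix.diagonal_mul_diagonal]
    simp only [fun s => mul_inv_cancel₀ (hWne s)]
    rw [Matrix.diagonal_one, Matrix.mul_one]
  have hMc : ∀ cv : Fin K → ℝ,
      ((M *ᵥ cv) ⬝ᵥ (M *ᵥ cv)) * (lamK - ε)^2 ≤ ε^2 * (cv ⬝ᵥ cv) := by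
    intro cv
    set u : Fin K → ℝ := fun t => (W t)⁻¹ * cv t with hu
    have h4 : M *ᵥ cv = Nm *ᵥ u := by
      rw [hMN, ← Matrix.mulVec_mulVec, DKaux.diag_mulVec]
    have h5 := hNu u
    have h6 : (u ⬝ᵥ u) * (lamK - ε)^2 ≤ cv ⬝ᵥ cv := by
      rw [dotProduct, dotProduct, Finset.sum_mul]
      refine Finset.sum_le_sum fun t _ => ?_
      have hWt := hW t
      have hWpos : 0 < W t := lt_of_lt_of_le hδpos hWt
      have h8 : 0 ≤ (W t)⁻¹ := inv_nonneg.mpr (le_of_lt hWpos)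
      have h7 : (W t)⁻¹ * (lamK - ε) ≤ 1 := by
        rw [inv_mul_le_iff₀ hWpos]
        simpa using hWt
      have h9 : ((W t)⁻¹ * (lamK - ε))^2 ≤ 1 := by
        nlinarith [mul_nonneg h8 (le_of_lt hδpos)]
      have h10 : u t = (W t)⁻¹ * cv t := rfl
      rw [h10]
      nlinarith [sq_nonneg (cv t), sq_nonneg ((W t)⁻¹ * (lamK - ε) * cv t)]
    calc ((M *ᵥ cv) ⬝ᵥ (M *ᵥ cv)) * (lamK - ε)^2
        = ((Nm *ᵥ u) ⬝ᵥ (Nm *ᵥ u)) * (lamK - ε)^2 := by rw [h4]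
      _ ≤ (ε^2 * (u ⬝ᵥ u)) * (lamK - ε)^2 :=
          mul_le_mul_of_nonneg_right h5 (sq_nonneg _)
      _ = ε^2 * ((u ⬝ᵥ u) * (lamK - ε)^2) := by ring
      _ ≤ ε^2 * (cv ⬝ᵥ cv) := mul_le_mul_of_nonneg_left h6 (sq_nonneg ε)
  have h𝒳M : 𝒳τᵀ * M = 0 := by
    rw [hMdef, Matrix.mul_sub, ← Matrix.mul_assoc, h𝒳orth, Matrix.one_mul, ← hSdef, sub_self]
  have hXsplit : ∀ cv : Fin K → ℝ, Xτ *ᵥ cv = 𝒳τ *ᵥ (S *ᵥ cv) + M *ᵥ cv := by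
    intro cv
    rw [hMdef, Matrix.sub_mulVec, Matrix.mulVec_mulVec]
    abel
  have hSc : ∀ cv : Fin K → ℝ,
      (S *ᵥ cv) ⬝ᵥ (S *ᵥ cv) = cv ⬝ᵥ cv - (M *ᵥ cv) ⬝ᵥ (M *ᵥ cv) := by
    intro cv
    have e0 : cv ⬝ᵥ cv = (Xτ *ᵥ cv) ⬝ᵥ (Xτ *ᵥ cv) := (DKaux.orth_mul_dot Xτ hXorth cv cv).symm
    have ecross : (𝒳τ *ᵥ (S *ᵥ cv)) ⬝ᵥ (M *ᵥ cv) = 0 := by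
      rw [DKaux.mulVec_dot, Matrix.mulVec_mulVec, h𝒳M, Matrix.zero_mulVec, dotProduct_zero]
    have ecross2 : (M *ᵥ cv) ⬝ᵥ (𝒳τ *ᵥ (S *ᵥ cv)) = 0 := by
      rw [dotProduct_comm]; exact ecross
    have emain : (𝒳τ *ᵥ (S *ᵥ cv)) ⬝ᵥ (𝒳τ *ᵥ (S *ᵥ cv)) = (S *ᵥ cv) ⬝ᵥ (S *ᵥ cv) :=
      DKaux.orth_mul_dot 𝒳τ h𝒳orth _ _
    rw [e0, hXsplit cv, add_dotProduct, dotProduct_add, dotProduct_add,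
      emain, ecross, ecross2]
    ring
  -- spectral decomposition of H = Sᵀ S
  set H := Sᵀ * S with hHdef
  have hHherm : H.IsHermitian := by
    rw [Matrix.IsHermitian, Matrix.conjTranspose_eq_transpose_of_trivial, hHdef,
      Matrix.transpose_mul, Matrix.transpose_transpose]
  set d := hHherm.eigenvalues with hd
  set V : Matrix (Fin K) (Fin K) ℝ := ↑hHherm.eigenvectorUnitary with hV
  have hVtV : Vᵀ * V = 1 := by
    have h := Matrix.UnitaryGroup.star_mul_self hHherm.eigenvectorUnitary
    simpa [Matrix.star_eq_conjTranspose, Matrix.conjTranspose_eq_transpose_of_trivial, hV] using h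
  have hVVt : V * Vᵀ = 1 := mul_eq_one_comm.mp hVtV
  have hspec : H = V * Matrix.diagonal d * Vᵀ := by
    have h := hHherm.spectral_theorem
    simpa [Matrix.star_eq_conjTranspose, Matrix.conjTranspose_eq_transpose_of_trivial,
      Function.comp, hV, hd, RCLike.ofReal_real_eq_id] using h
  have hsand : ∀ f1 f2 : Fin K → ℝ,
      (V * Matrix.diagonal f1 * Vᵀ) * (V * Matrix.diagonal f2 * Vᵀ)
        = V * Matrix.diagonal (fun s => f1 s * f2 s) * Vᵀ := by
    intro f1 f2
    calc (V * Matrix.diagonal f1 * Vᵀ) * (V * Matrix.diagonal f2 * Vᵀ)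
        = V * Matrix.diagonal f1 * ((Vᵀ * V) * (Matrix.diagonal f2 * Vᵀ)) := by
          simp only [Matrix.mul_assoc]
      _ = V * Matrix.diagonal f1 * (Matrix.diagonal f2 * Vᵀ) := by
          rw [hVtV, Matrix.one_mul]
      _ = V * (Matrix.diagonal f1 * Matrix.diagonal f2) * Vᵀ := by
          simp only [Matrix.mul_assoc]
      _ = V * Matrix.diagonal (fun s => f1 s * f2 s) * Vᵀ := by
          rw [Matrix.diagonal_mul_diagonal]
  have hHVmat : H * V = V * Matrix.diagonal d := by
    rw [hspec, Matrix.mul_assoc (V * Matrix.diagonal d) Vᵀ V, hVtV, Matrix.mul_one]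
  have hcolv : ∀ s, H *ᵥ (fun i => V i s) = fun i => V i s * d s := by
    intro s
    ext i
    have h := congrFun (congrFun hHVmat i) s
    rw [Matrix.mul_apply, Matrix.mul_diagonal] at h
    simpa [Matrix.mulVec, dotProduct] using h
  have hcolunit : ∀ s, (fun i => V i s) ⬝ᵥ (fun i => V i s) = 1 := by
    intro s
    have h := congrFun (congrFun hVtV s) s
    rw [Matrix.mul_apply, Matrix.one_apply_eq] at h
    simpa [dotProduct, Matrix.transpose_apply] using h
  have hdval : ∀ s, (S *ᵥ fun i => V i s) ⬝ᵥ (S *ᵥ fun i => V i s) = d s := by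
    intro s
    rw [DKaux.mulVec_dot, Matrix.mulVec_mulVec, ← hHdef, hcolv s]
    have h := hcolunit s
    rw [dotProduct] at h ⊢
    calc ∑ t, V t s * (V t s * d s) = (∑ t, V t s * V t s) * d s := by
          rw [Finset.sum_mul]; exact Finset.sum_congr rfl fun t _ => by ring
      _ = d s := by rw [h, one_mul]
  have hd_le1 : ∀ s, d s ≤ 1 := by
    intro s
    have h := hSc (fun i => V i s)
    rw [hdval s, hcolunit s] at h
    linarith [DKaux.dot_self_nonneg (M *ᵥ fun i => V i s)]
  have hd_pos : ∀ s, 0 < d s := by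
    intro s
    have h := hSc (fun i => V i s)
    rw [hdval s, hcolunit s] at h
    have h2 := hMc (fun i => V i s)
    rw [hcolunit s] at h2
    have hmm := DKaux.dot_self_nonneg (M *ᵥ fun i => V i s)
    have h7 : 7*lamK/8 ≤ lamK - ε := by linarith
    have h8 : (7*lamK/8)^2 ≤ (lamK - ε)^2 := by nlinarith
    have h9 : ε^2 ≤ (lamK/8)^2 := by nlinarith
    nlinarith [h2, hmm, h8, h9, mul_pos hlamK hlamK,
      mul_le_mul_of_nonneg_left h8 hmm]
  -- the orthogonal factor
  set g : Fin K → ℝ := fun s => (Real.sqrt (d s))⁻¹ with hg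
  set G := V * Matrix.diagonal g * Vᵀ with hGdef
  set Om := S * G with hOm
  have hsqrt_pos : ∀ s, 0 < Real.sqrt (d s) := fun s => Real.sqrt_pos.mpr (hd_pos s)
  have hsqrt_ne : ∀ s, Real.sqrt (d s) ≠ 0 := fun s => ne_of_gt (hsqrt_pos s)
  have hsq : ∀ s, Real.sqrt (d s) * Real.sqrt (d s) = d s :=
    fun s => Real.mul_self_sqrt (le_of_lt (hd_pos s))
  have hGt : Gᵀ = G := by
    rw [hGdef, Matrix.transpose_mul, Matrix.transpose_mul, Matrix.transpose_transpose,
      Matrix.diagonal_transpose, ← Matrix.mul_assoc]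
  have hgd : ∀ s, g s * d s = Real.sqrt (d s) := by
    intro s
    have h : g s * d s = (Real.sqrt (d s))⁻¹ * (Real.sqrt (d s) * Real.sqrt (d s)) := by
      rw [hsq s]
    rw [h, ← mul_assoc, inv_mul_cancel₀ (hsqrt_ne s), one_mul]
  have hgdg : ∀ s, (g s * d s) * g s = 1 := by
    intro s
    rw [hgd s]
    exact mul_inv_cancel₀ (hsqrt_ne s)
  have hGH : G * H = V * Matrix.diagonal (fun s => g s * d s) * Vᵀ := by
    rw [hGdef, hspec]; exact hsand g d
  have hOtO : Omᵀ * Om = 1 := by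
    have e1 : Omᵀ * Om = G * (H * G) := by
      rw [hOm, Matrix.transpose_mul, hGt, hHdef]
      simp only [Matrix.mul_assoc]
    rw [e1, ← Matrix.mul_assoc, hGH]
    have e3 : (V * Matrix.diagonal (fun s => g s * d s) * Vᵀ) * G
        = V * Matrix.diagonal (fun s => (g s * d s) * g s) * Vᵀ := by
      rw [hGdef]; exact hsand _ g
    rw [e3]
    have e4 : Matrix.diagonal (fun s => (g s * d s) * g s) = (1 : Matrix (Fin K) (Fin K) ℝ) := by
      rw [show (fun s => (g s * d s) * g s) = fun _ : Fin K => (1:ℝ) from funext hgdg,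
        Matrix.diagonal_one]
    rw [e4, Matrix.mul_one, hVVt]
  have hOOt : Om * Omᵀ = 1 := mul_eq_one_comm.mp hOtO
  -- traces
  have htrVDV : ∀ f : Fin K → ℝ, (V * Matrix.diagonal f * Vᵀ).trace = ∑ s, f s := by
    intro f
    rw [Matrix.trace_mul_comm (V * Matrix.diagonal f) Vᵀ, ← Matrix.mul_assoc, hVtV,
      Matrix.one_mul, Matrix.trace_diagonal]
  have htrH : H.trace = ∑ s, d s := by rw [hspec, htrVDV]
  have htrOS : (Omᵀ * S).trace = ∑ s, Real.sqrt (d s) := by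
    have e5 : Omᵀ * S = G * H := by
      rw [hOm, Matrix.transpose_mul, hGt, hHdef, Matrix.mul_assoc]
    rw [e5, hGH, htrVDV]
    exact Finset.sum_congr rfl fun s _ => hgd s
  have hSt : Sᵀ = Xτᵀ * 𝒳τ := by
    rw [hSdef, Matrix.transpose_mul, Matrix.transpose_transpose]
  have htrMM : Mᵀ * M = 1 - H := by
    have t2 : Xτᵀ * (𝒳τ * S) = H := by
      rw [← Matrix.mul_assoc, ← hSt, ← hHdef]
    have t3 : (Sᵀ * 𝒳τᵀ) * Xτ = H := by
      rw [Matrix.mul_assoc, ← hSdef, ← hHdef]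
    have t4 : (Sᵀ * 𝒳τᵀ) * (𝒳τ * S) = H := by
      rw [Matrix.mul_assoc, ← Matrix.mul_assoc 𝒳τᵀ 𝒳τ S, h𝒳orth, Matrix.one_mul, ← hHdef]
    rw [hMdef, Matrix.transpose_sub, Matrix.transpose_mul, Matrix.sub_mul,
      Matrix.mul_sub, Matrix.mul_sub, hXorth, t2, t3, t4]
    abel
  -- Frobenius computations
  have hf2 : ∀ (A : Matrix (Fin N) (Fin K) ℝ), ∑ i, ∑ j, (A i j)^2 = (Aᵀ * A).trace := by
    intro A
    rw [DKaux.trace_transpose_mul]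
    exact Finset.sum_congr rfl fun i _ => Finset.sum_congr rfl fun j _ => pow_two (A i j)
  have hOexp : (Xτ - 𝒳τ * Om)ᵀ * (Xτ - 𝒳τ * Om)
      = (1 - Xτᵀ * (𝒳τ * Om)) - ((Omᵀ * 𝒳τᵀ) * Xτ - (Omᵀ * 𝒳τᵀ) * (𝒳τ * Om)) := by
    rw [Matrix.transpose_sub, Matrix.transpose_mul, Matrix.sub_mul, Matrix.mul_sub,
      Matrix.mul_sub, hXorth]
  have htr2 : (Xτᵀ * (𝒳τ * Om)).trace = ∑ s, Real.sqrt (d s) := by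
    have e6 : (Xτᵀ * (𝒳τ * Om))ᵀ = Omᵀ * S := by
      rw [Matrix.transpose_mul, Matrix.transpose_mul, Matrix.transpose_transpose,
        Matrix.mul_assoc, ← hSdef]
    rw [← Matrix.trace_transpose (Xτᵀ * (𝒳τ * Om)), e6, htrOS]
  have t5 : (Omᵀ * 𝒳τᵀ) * Xτ = Omᵀ * S := by rw [Matrix.mul_assoc, ← hSdef]
  have t6 : (Omᵀ * 𝒳τᵀ) * (𝒳τ * Om) = 1 := by
    rw [Matrix.mul_assoc, ← Matrix.mul_assoc 𝒳τᵀ 𝒳τ Om, h𝒳orth, Matrix.one_mul, hOtO]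
  have hval : ∑ i, ∑ j, ((Xτ - 𝒳τ * Om) i j)^2
      = 2*(K:ℝ) - 2*∑ s, Real.sqrt (d s) := by
    rw [hf2 _, hOexp, t5, t6, Matrix.trace_sub, Matrix.trace_sub, Matrix.trace_sub,
      Matrix.trace_one, htr2, htrOS]
    simp only [Fintype.card_fin]
    ring
  have hvalM : ∑ i, ∑ j, (M i j)^2 = (K:ℝ) - ∑ s, d s := by
    rw [hf2 M, htrMM, Matrix.trace_sub, Matrix.trace_one, htrH]
    simp [Fintype.card_fin]
  have hdsum : ∑ s, d s ≤ ∑ s, Real.sqrt (d s) := by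
    refine Finset.sum_le_sum fun s _ => ?_
    have hp := hd_pos s
    have hle := hd_le1 s
    have hq0 := Real.sqrt_nonneg (d s)
    have hq1 : Real.sqrt (d s) ≤ 1 := by nlinarith [hsq s, sq_nonneg (Real.sqrt (d s) - 1)]
    nlinarith [hsq s, mul_nonneg hq0 (sub_nonneg.mpr hq1)]
  have hMbound : (∑ i, ∑ j, (M i j)^2) * (lamK - ε)^2 ≤ (K:ℝ) * ε^2 := by
    have e8 : ∑ i, ∑ j, (M i j)^2
        = ∑ s, (M *ᵥ Pi.single s 1) ⬝ᵥ (M *ᵥ Pi.single s 1) := by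
      rw [Finset.sum_comm]
      refine Finset.sum_congr rfl fun s _ => ?_
      rw [Matrix.mulVec_single]
      simp [dotProduct, sq]
    have e9 : ∀ s : Fin K, (Pi.single s 1 : Fin K → ℝ) ⬝ᵥ Pi.single s 1 = 1 := by
      intro s; simp [dotProduct, Pi.single_apply]
    rw [e8, Finset.sum_mul]
    calc ∑ s, ((M *ᵥ Pi.single s 1) ⬝ᵥ (M *ᵥ Pi.single s 1)) * (lamK - ε)^2
        ≤ ∑ s : Fin K, ε^2 * ((Pi.single s 1 : Fin K → ℝ) ⬝ᵥ Pi.single s 1) :=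
          Finset.sum_le_sum fun s _ => hMc _
      _ = (K:ℝ) * ε^2 := by simp [e9, Finset.sum_const, Finset.card_univ, mul_comm]
  have hf2nonneg : (0:ℝ) ≤ ∑ i, ∑ j, ((Xτ - 𝒳τ * Om) i j)^2 :=
    Finset.sum_nonneg fun _ _ => Finset.sum_nonneg fun _ _ => sq_nonneg _
  have hMnonneg : (0:ℝ) ≤ ∑ i, ∑ j, (M i j)^2 :=
    Finset.sum_nonneg fun _ _ => Finset.sum_nonneg fun _ _ => sq_nonneg _
  have hchain : (∑ i, ∑ j, ((Xτ - 𝒳τ * Om) i j)^2) * (lamK - ε)^2 ≤ 2*(K:ℝ)*ε^2 := by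
    have hle2 : ∑ i, ∑ j, ((Xτ - 𝒳τ * Om) i j)^2 ≤ 2 * ∑ i, ∑ j, (M i j)^2 := by
      rw [hval, hvalM]; linarith [hdsum]
    nlinarith [hMbound, sq_nonneg (lamK - ε), hMnonneg, hle2]
  refine ⟨Om, hOtO, hOOt, ?_⟩
  have hT2 : ((8 * Real.sqrt (2*(K:ℝ)) / lamK) * ε)^2 = 128*(K:ℝ)*ε^2/lamK^2 := by
    rw [mul_pow, div_pow, mul_pow, Real.sq_sqrt (by positivity : (0:ℝ) ≤ 2*(K:ℝ))]
    ring
  have hfinal : ∑ i, ∑ j, ((Xτ - 𝒳τ * Om) i j)^2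
      ≤ ((8 * Real.sqrt (2*(K:ℝ)) / lamK) * ε)^2 := by
    rw [hT2, le_div_iff₀ (by positivity : (0:ℝ) < lamK^2)]
    have hdd : lamK^2 ≤ 64*(lamK - ε)^2 := by nlinarith
    nlinarith [mul_le_mul_of_nonneg_left hdd hf2nonneg, hchain]
  have hT0 : 0 ≤ (8 * Real.sqrt (2*(K:ℝ)) / lamK) * ε := by positivity
  calc frobNorm (Xτ - 𝒳τ * Om)
      = Real.sqrt (∑ i, ∑ j, ((Xτ - 𝒳τ * Om) i j)^2) := rfl
    _ ≤ Real.sqrt (((8 * Real.sqrt (2*(K:ℝ)) / lamK) * ε)^2) := Real.sqrt_le_sqrt hfinal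
    _ = (8 * Real.sqrt (2*(K:ℝ)) / lamK) * ε := Real.sqrt_sq hT0
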